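/- Fix τ > 0 and ζ > 0, and define for t ∈ [0,τ] the scalar functions F₀(t) = -2 ζ^{-1} (1-e^{-τζ})^{-2} (1-e^{-tζ})(1-e^{-(τ-t)ζ})(e^{-tζ} - (1+e^{-τζ})/2) and F₁(t) = 6 ζ^{-2} (1-e^{-τζ})^{-2} (1-e^{-tζ})(1-e^{-(τ-t)ζ}) e^{-tζ}. Then the divergence equation -d/dt (F₀(t) e^{-tζ}) + ζ² F₁(t) e^{-tζ} = e^{-tζ} holds for all t ∈ (0,τ). -/

import Mathlib

open Real Set

theorem stmt_3 (τ ζ : ℝ) (hτ : 0 < τ) (hζ : 0 < ζ)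
    (F₀ F₁ : ℝ → ℝ)
    (hF₀ : ∀ t, F₀ t = -2 * ζ⁻¹ * (1 - exp (-(τ*ζ)))⁻¹ ^ 2 *
      (1 - exp (-(t*ζ))) * (1 - exp (-((τ-t)*ζ))) * (exp (-(t*ζ)) - (1 + exp (-(τ*ζ))) / 2))
    (hF₁ : ∀ t, F₁ t = 6 * ζ⁻¹ ^ 2 * (1 - exp (-(τ*ζ)))⁻¹ ^ 2 *
      (1 - exp (-(t*ζ))) * (1 - exp (-((τ-t)*ζ))) * exp (-(t*ζ))) :
    ∀ t ∈ Ioo 0 τ,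
      -(deriv (fun s => F₀ s * exp (-(s*ζ))) t) + ζ^2 * F₁ t * exp (-(t*ζ)) = exp (-(t*ζ)) := by
  intro t ht
  set E := exp (-(τ*ζ)) with hE
  -- derivatives of the basic exponentials
  have hA : ∀ s : ℝ, HasDerivAt (fun u => exp (-(u*ζ))) (-ζ * exp (-(s*ζ))) s := by
    intro s
    have h1 : HasDerivAt (fun u : ℝ => -(u*ζ)) (-ζ) s := by
      exact (hasDerivAt_mul_const ζ).neg
    simpa [mul_comm] using h1.exp
  have hB : HasDerivAt (fun u => exp (-((τ-u)*ζ))) (ζ * exp (-((τ-t)*ζ))) t := by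
    have h1 : HasDerivAt (fun u : ℝ => -((τ-u)*ζ)) ζ t := by
      exact (((hasDerivAt_const t τ).sub (hasDerivAt_id t)).mul_const ζ).neg.congr_deriv (by ring)
    simpa [mul_comm] using h1.exp
  set x := exp (-(t*ζ)) with hx
  set y := exp (-((τ-t)*ζ)) with hy
  set c : ℝ := -2 * ζ⁻¹ * (1 - E)⁻¹ ^ 2 with hc
  have H : HasDerivAt (fun s => F₀ s * exp (-(s*ζ)))
      (((((0 * (1 - x) + c * -(-ζ * x)) * (1 - y) + c * (1 - x) * -(ζ * y)) *
          (x - (1 + E)/2) + c * (1 - x) * (1 - y) * (-ζ * x)) * x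
        + c * (1 - x) * (1 - y) * (x - (1 + E)/2) * (-ζ * x))) t := by
    have key := (((((hasDerivAt_const t c).mul ((hasDerivAt_const t (1:ℝ)).sub (hA t))).mul
        ((hasDerivAt_const t (1:ℝ)).sub hB)).mul ((hA t).sub (hasDerivAt_const t ((1+E)/2)))).mul
        (hA t))
    have hfun : (fun s => F₀ s * exp (-(s*ζ))) =
        (fun s => c * (1 - exp (-(s*ζ))) * (1 - exp (-((τ-s)*ζ))) *
          (exp (-(s*ζ)) - (1+E)/2) * exp (-(s*ζ))) := by
      funext s; rw [hF₀ s]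
    rw [hfun]
    refine key.congr_deriv ?_
    simp only [Pi.mul_apply, Pi.sub_apply]
    ring
  rw [hF₁, H.deriv]
  -- algebra
  have hxy : x * y = E := by
    rw [hx, hy, hE, ← Real.exp_add]; ring_nf
  have hE1 : E < 1 := by
    rw [hE]
    have : -(τ*ζ) < 0 := by nlinarith
    calc exp (-(τ*ζ)) < exp 0 := Real.exp_lt_exp.mpr this
      _ = 1 := Real.exp_zero
  have hEne : (1 : ℝ) - E ≠ 0 := by linarith
  have hxne : x ≠ 0 := (Real.exp_pos _).ne'
  have hζne : ζ ≠ 0 := hζ.ne'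
  have hy2 : y = E / x := by
    field_simp [← hxy, mul_comm]
    rw [mul_comm]; exact hxy
  rw [hc, ← hx, ← hy, hy2]
  field_simp
  ring
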